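/- For every frontier position π of an AND-OR synthesis tree T with value function V : M → ℝ, the quantity V_t(π) equals the minimum, over all synthesis routes of the root of T that pass through π, of the route's total cost with respect to V; i.e. V_t(π) is the cost of the best synthesis plan in T containing the frontier node at π. -/

import Mathlib

inductive Mol (M : Type) where
  | frontier : M → Mol M
  | node : (ℝ × List (Mol M)) → List (ℝ × List (Mol M)) → Mol M

mutual
noncomputable def rn {M : Type} (V : M → ℝ) : Mol M → ℝ
  | .frontier m => V m
  | .node r rs => (rs.attach.map fun ⟨R, _⟩ => rnR V R).foldr min (rnR V r)
termination_by u => sizeOf u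
decreasing_by
  · simp; omega
  · have := List.sizeOf_lt_of_mem ‹R ∈ rs›; simp; omega

noncomputable def rnR {M : Type} (V : M → ℝ) : ℝ × List (Mol M) → ℝ
  | (c, ms) => c + (ms.attach.map fun ⟨u, _⟩ => rn V u).sum
termination_by R => sizeOf R
decreasing_by
  · have := List.sizeOf_lt_of_mem ‹u ∈ ms›; simp; omega
end

/-- A frontier position: a root-to-leaf path selecting, at each internal
molecule node, one reaction child and one molecule child of that reaction,
terminating at a frontier leaf. -/
inductive FPos {M : Type} : Mol M → Type
  | leaf (m : M) : FPos (.frontier m)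
  | step {r rs} (i : Fin (r :: rs : List (ℝ × List (Mol M))).length)
      (j : Fin ((r :: rs).get i).2.length)
      (rest : FPos (((r :: rs).get i).2.get j)) :
      FPos (.node r rs)

/-- `Vt V π`: the sum of the costs of the reaction nodes on `π`, plus the sum of
`rn V` over the off-path molecule children of those reaction nodes, plus `V` of
the molecule at the leaf of `π`. -/
noncomputable def Vt {M : Type} (V : M → ℝ) : {u : Mol M} → FPos u → ℝ
  | _, .leaf m => V m
  | _, .step (r := r) (rs := rs) i j rest =>
      ((r :: rs).get i).1
        + ∑ j' ∈ Finset.univ.erase j, rn V (((r :: rs).get i).2.get j')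
        + Vt V rest

inductive Route {M : Type} : Mol M → Type
  | leaf (m : M) : Route (.frontier m)
  | step {r rs} (i : Fin (r :: rs : List (ℝ × List (Mol M))).length)
      (subs : ∀ j : Fin ((r :: rs).get i).2.length, Route (((r :: rs).get i).2.get j)) :
      Route (.node r rs)

noncomputable def routeCost {M : Type} (V : M → ℝ) : {u : Mol M} → Route u → ℝ
  | _, .leaf m => V m
  | _, .step (r := r) (rs := rs) i subs =>
      ((r :: rs).get i).1 + ∑ j, routeCost V (subs j)

/-- A route passes through a frontier position if at every internal molecule
node on the position it selects the reaction child lying on the position, and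
its subroute at the next molecule node passes through the rest of the
position. -/
inductive Passes {M : Type} : {u : Mol M} → Route u → FPos u → Prop
  | leaf (m : M) : Passes (Route.leaf m) (FPos.leaf m)
  | step {r rs} (i : Fin (r :: rs : List (ℝ × List (Mol M))).length)
      (subs : ∀ j' : Fin ((r :: rs).get i).2.length, Route (((r :: rs).get i).2.get j'))
      (j : Fin ((r :: rs).get i).2.length)
      (rest : FPos (((r :: rs).get i).2.get j)) :
      Passes (subs j) rest → Passes (Route.step i subs) (FPos.step i j rest)


section Aux
variable {M : Type} (V : M → ℝ)

private lemma foldr_min_le_init (l : List ℝ) (b : ℝ) : l.foldr min b ≤ b := by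
  induction l with
  | nil => simp
  | cons a l ih => exact le_trans (min_le_right _ _) ih

private lemma foldr_min_le_mem {l : List ℝ} {a : ℝ} (h : a ∈ l) (b : ℝ) :
    l.foldr min b ≤ a := by
  induction l with
  | nil => simp at h
  | cons c l ih =>
    rcases List.mem_cons.mp h with rfl | h
    · exact min_le_left _ _
    · exact le_trans (min_le_right _ _) (ih h)

private lemma foldr_min_eq (l : List ℝ) (b : ℝ) :
    l.foldr min b = b ∨ l.foldr min b ∈ l := by
  induction l with
  | nil => left; rfl
  | cons a l ih =>
    simp only [List.foldr_cons]
    rcases le_total a (l.foldr min b) with h | h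
    · right; simp [min_eq_left h]
    · rw [min_eq_right h]
      rcases ih with h' | h'
      · left; exact h'
      · right; exact List.mem_cons_of_mem _ h'

private lemma list_sum_fin {α : Type*} (ms : List α) (f : α → ℝ) :
    ∑ j : Fin ms.length, f (ms.get j) = (ms.map f).sum := by
  rw [← Fin.sum_univ_getElem (ms.map f)]
  exact (Fin.sum_congr' _ (by simp)).symm.trans (Finset.sum_congr rfl (by simp))

private lemma rn_node (r : ℝ × List (Mol M)) (rs : List (ℝ × List (Mol M))) :
    rn V (.node r rs) = (rs.map (rnR V)).foldr min (rnR V r) := by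
  rw [rn]
  congr 1
  simp only [List.map_subtype, List.unattach_attach]

private lemma rnR_eq (p : ℝ × List (Mol M)) :
    rnR V p = p.1 + ∑ j : Fin p.2.length, rn V (p.2.get j) := by
  obtain ⟨c, ms⟩ := p
  rw [rnR]
  congr 1
  simp only [List.map_subtype, List.unattach_attach]
  exact (list_sum_fin ms (rn V)).symm

private lemma rn_le (r : ℝ × List (Mol M)) (rs : List (ℝ × List (Mol M)))
    (i : Fin (r :: rs).length) : rn V (.node r rs) ≤ rnR V ((r :: rs).get i) := by
  rw [rn_node]
  induction i using Fin.cases with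
  | zero => exact foldr_min_le_init _ _
  | succ k =>
    exact foldr_min_le_mem (List.mem_map_of_mem (rs.get_mem k)) _

private lemma rn_exists_index (r : ℝ × List (Mol M)) (rs : List (ℝ × List (Mol M))) :
    ∃ i : Fin (r :: rs).length, rn V (.node r rs) = rnR V ((r :: rs).get i) := by
  rw [rn_node]
  rcases foldr_min_eq (rs.map (rnR V)) (rnR V r) with h | h
  · exact ⟨⟨0, Nat.succ_pos _⟩, h⟩
  · rcases List.mem_map.mp h with ⟨R, hR, hEq⟩
    rcases List.mem_iff_get.mp hR with ⟨k, rfl⟩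
    exact ⟨k.succ, by simpa using hEq.symm⟩

private lemma rn_le_routeCost : ∀ {u : Mol M} (rt : Route u), rn V u ≤ routeCost V rt := by
  intro u rt
  induction rt with
  | leaf m => rw [rn, routeCost]
  | step i subs ih =>
    rename_i r rs
    rw [routeCost]
    calc rn V (.node r rs) ≤ rnR V ((r :: rs).get i) := rn_le V r rs i
      _ = ((r :: rs).get i).1 + ∑ j, rn V (((r :: rs).get i).2.get j) := rnR_eq V _
      _ ≤ ((r :: rs).get i).1 + ∑ j, routeCost V (subs j) :=
          add_le_add (le_refl _) (Finset.sum_le_sum fun j _ => ih j)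

private lemma exists_opt (u : Mol M) : ∃ rt : Route u, routeCost V rt = rn V u := by
  suffices H : ∀ n (u : Mol M), sizeOf u < n → ∃ rt : Route u, routeCost V rt = rn V u from
    H (sizeOf u + 1) u (Nat.lt_succ_self _)
  intro n
  induction n with
  | zero => intro u h; omega
  | succ n ih =>
    intro u hu
    match u with
    | .frontier m => exact ⟨.leaf m, by rw [rn, routeCost]⟩
    | .node r rs =>
      obtain ⟨i, hi⟩ := rn_exists_index V r rs
      have hsize : ∀ j : Fin ((r :: rs).get i).2.length,
          sizeOf (((r :: rs).get i).2.get j) < n := by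
        intro j
        have h1 : sizeOf ((r :: rs).get i) < sizeOf (r :: rs) :=
          List.sizeOf_lt_of_mem (List.get_mem _ _)
        have h2 : sizeOf (((r :: rs).get i).2.get j) < sizeOf ((r :: rs).get i).2 :=
          List.sizeOf_lt_of_mem (List.get_mem _ _)
        have h3 : sizeOf ((r :: rs).get i).2 < sizeOf ((r :: rs).get i) := by
          generalize ((r :: rs) : List (ℝ × List (Mol M))).get i = q
          obtain ⟨c, ms⟩ := q
          simp
        have h4 : sizeOf (r :: rs : List (ℝ × List (Mol M))) = 1 + sizeOf r + sizeOf rs := by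
          simp
        have h5 : sizeOf (Mol.node r rs : Mol M) = 1 + sizeOf r + sizeOf rs := by
          simp
        omega
      choose subs hsubs using fun j => ih _ (hsize j)
      refine ⟨.step i subs, ?_⟩
      rw [routeCost, hi, rnR_eq]
      congr 1
      exact Finset.sum_congr rfl fun j _ => hsubs j

end Aux

theorem Vt_eq_min_routeCost_through {M : Type} (V : M → ℝ) (u : Mol M) (π : FPos u) :
    IsLeast {x : ℝ | ∃ rt : Route u, Passes rt π ∧ routeCost V rt = x} (Vt V π) := by
  induction π with
  | leaf m =>
    constructor
    · exact ⟨Route.leaf m, Passes.leaf m, by rw [routeCost, Vt]⟩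
    · rintro x ⟨rt, hp, rfl⟩
      cases hp
      rw [routeCost, Vt]
  | step i j rest ih =>
    rename_i r rs
    constructor
    · obtain ⟨rtj, hpass, hcost⟩ := ih.1
      set subs : ∀ j' : Fin ((r :: rs).get i).2.length, Route (((r :: rs).get i).2.get j') :=
        Function.update (fun j' => (exists_opt V (((r :: rs).get i).2.get j')).choose) j rtj
        with hsubs
      refine ⟨Route.step i subs, Passes.step i subs j rest ?_, ?_⟩
      · rw [hsubs, Function.update_self]
        exact hpass
      · rw [routeCost, Vt]
        rw [← Finset.add_sum_erase _ _ (Finset.mem_univ j)]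
        have h1 : routeCost V (subs j) = Vt V rest := by
          rw [hsubs, Function.update_self]; exact hcost
        have h2 : ∀ j' ∈ Finset.univ.erase j,
            routeCost V (subs j') = rn V (((r :: rs).get i).2.get j') := by
          intro j' hj'
          rw [hsubs, Function.update_of_ne (Finset.ne_of_mem_erase hj')]
          exact (exists_opt V (((r :: rs).get i).2.get j')).choose_spec
        rw [h1, Finset.sum_congr rfl h2]
        ring
    · rintro x ⟨rt, hp, rfl⟩
      cases hp with
      | step _ subs _ _ hsub =>
        rw [routeCost, Vt]
        rw [← Finset.add_sum_erase _ _ (Finset.mem_univ j)]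
        have h1 : Vt V rest ≤ routeCost V (subs j) := ih.2 ⟨subs j, hsub, rfl⟩
        have h2 : ∑ j' ∈ Finset.univ.erase j, rn V (((r :: rs).get i).2.get j')
            ≤ ∑ j' ∈ Finset.univ.erase j, routeCost V (subs j') :=
          Finset.sum_le_sum fun j' _ => rn_le_routeCost V (subs j')
        linarith
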